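/- For all integers n ≥ 3, the total number of symmetric peaks over all Catalan words of length n equals Σ_{k=0}^{n-3} C(2k+2, k); for n = 1, 2 this total is 0. -/

import Mathlib

/-- The set of Catalan words of length `n`: words `w` over ℕ with `w 1 = 0` and
`w (i+1) ≤ w i + 1` for all `i`. -/
def CatalanWord (n : ℕ) : Set (List ℕ) :=
  {w | w.length = n ∧ w.getD 0 0 = 0 ∧
    ∀ i, i + 1 < n → w.getD (i + 1) 0 ≤ w.getD i 0 + 1}

/-- Number of symmetric peaks of `w`: occurrences of a factor `a (a+1)^l a` with `l ≥ 1`. -/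
def symPeaks (w : List ℕ) : ℕ :=
  ∑ l ∈ Finset.Icc 1 w.length, ((Finset.range w.length).filter (fun i =>
    i + l + 1 < w.length ∧
    (∀ j, j < l → w.getD (i + 1 + j) 0 = w.getD i 0 + 1) ∧
    w.getD (i + l + 1) 0 = w.getD i 0)).card

/-- last letter -/
def lastL (w : List ℕ) : ℕ := w.getD (w.length - 1) 0

def ext (w : List ℕ) : List (List ℕ) := (List.range (lastL w + 2)).map (fun b => w ++ [b])

def enum : ℕ → List (List ℕ)
  | 0 => []
  | 1 => [[0]]
  | (n+2) => (enum (n+1)).flatMap ext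

def newP (w : List ℕ) (b : ℕ) : ℕ :=
  ∑ l ∈ Finset.Icc 1 w.length, ((Finset.range w.length).filter (fun i =>
    i + l + 1 = w.length ∧
    (∀ j, j < l → w.getD (i + 1 + j) 0 = w.getD i 0 + 1) ∧
    b = w.getD i 0)).card

def pendCount (w : List ℕ) : ℕ :=
  ∑ l ∈ Finset.Icc 1 w.length, ((Finset.range w.length).filter (fun i =>
    i + l + 1 = w.length ∧
    (∀ j, j < l → w.getD (i + 1 + j) 0 = w.getD i 0 + 1))).card

lemma getD_append_lt (w : List ℕ) (b : ℕ) (k : ℕ) (h : k < w.length) :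
    (w ++ [b]).getD k 0 = w.getD k 0 := List.getD_append _ _ _ _ h

lemma getD_append_len (w : List ℕ) (b : ℕ) : (w ++ [b]).getD w.length 0 = b := by
  simp [List.getD_eq_getElem?_getD]

lemma getD_ge (w : List ℕ) (k : ℕ) (h : w.length ≤ k) : w.getD k 0 = 0 := by
  simp [List.getD_eq_getElem?_getD, List.getElem?_eq_none (by omega : w.length ≤ k)]

lemma lastL_append (w : List ℕ) (b : ℕ) : lastL (w ++ [b]) = b := by
  have : (w ++ [b]).length - 1 = w.length := by simp
  rw [lastL, this, getD_append_len]

/-- if a run condition holds ending at the last position, the base is `lastL w - 1` -/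
lemma run_last (w : List ℕ) (i l : ℕ) (h1 : 1 ≤ l) (h2 : i + l + 1 = w.length)
    (hr : ∀ j, j < l → w.getD (i + 1 + j) 0 = w.getD i 0 + 1) :
    w.getD i 0 + 1 = lastL w := by
  have := hr (l - 1) (by omega)
  rw [lastL]
  have he : i + 1 + (l - 1) = w.length - 1 := by omega
  rw [he] at this
  omega

lemma inner_drop (n : ℕ) (f : ℕ → ℕ) (h : f n = 0) :
    ∑ i ∈ Finset.range (n+1), f i = ∑ i ∈ Finset.range n, f i := by
  rw [Finset.sum_range_succ, h, add_zero]

lemma outer_drop (n : ℕ) (f : ℕ → ℕ) (h : f (n+1) = 0) :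
    ∑ l ∈ Finset.Icc 1 (n+1), f l = ∑ l ∈ Finset.Icc 1 n, f l := by
  rw [Finset.sum_Icc_succ_top (by omega), h, add_zero]

lemma symPeaks_append (w : List ℕ) (b : ℕ) :
    symPeaks (w ++ [b]) = symPeaks w + newP w b := by
  classical
  have hlen : (w ++ [b]).length = w.length + 1 := by simp
  set n := w.length with hn
  simp only [symPeaks, newP, hlen, Finset.card_filter]
  have key : ∀ l ∈ Finset.Icc 1 (n+1), ∀ i ∈ Finset.range (n+1),
      (if (i + l + 1 < n+1 ∧ (∀ j, j < l → (w ++ [b]).getD (i+1+j) 0 = (w ++ [b]).getD i 0 + 1) ∧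
          (w ++ [b]).getD (i+l+1) 0 = (w ++ [b]).getD i 0) then 1 else 0)
      = (if (i + l + 1 < n ∧ (∀ j, j < l → w.getD (i+1+j) 0 = w.getD i 0 + 1) ∧
          w.getD (i+l+1) 0 = w.getD i 0) then 1 else 0)
      + (if (i + l + 1 = n ∧ (∀ j, j < l → w.getD (i+1+j) 0 = w.getD i 0 + 1) ∧
          b = w.getD i 0) then (1:ℕ) else 0) := by
    intro l hl i hi
    simp only [Finset.mem_Icc, Finset.mem_range] at hl hi
    rcases Nat.lt_trichotomy (i+l+1) n with h | h | h
    · have e1 : (w ++ [b]).getD i 0 = w.getD i 0 := getD_append_lt _ _ _ (by omega)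
      have e2 : (w ++ [b]).getD (i+l+1) 0 = w.getD (i+l+1) 0 := getD_append_lt _ _ _ (by omega)
      have e3 : (∀ j, j < l → (w ++ [b]).getD (i+1+j) 0 = (w ++ [b]).getD i 0 + 1) ↔
          (∀ j, j < l → w.getD (i+1+j) 0 = w.getD i 0 + 1) := by
        apply forall_congr'; intro j; apply imp_congr_right; intro hj
        rw [getD_append_lt _ _ _ (by omega), e1]
      have hiff : (i + l + 1 < n+1 ∧ (∀ j, j < l → (w ++ [b]).getD (i+1+j) 0 = (w ++ [b]).getD i 0 + 1) ∧
          (w ++ [b]).getD (i+l+1) 0 = (w ++ [b]).getD i 0) ↔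
          (i + l + 1 < n ∧ (∀ j, j < l → w.getD (i+1+j) 0 = w.getD i 0 + 1) ∧
          w.getD (i+l+1) 0 = w.getD i 0) := by
        rw [e3]; constructor <;> rintro ⟨h1, h2, h3⟩
        · exact ⟨h, h2, by rw [← e2, h3, e1]⟩
        · exact ⟨by omega, h2, by rw [e2, e1]; exact h3⟩
      have hz : (if (i + l + 1 = n ∧ (∀ j, j < l → w.getD (i+1+j) 0 = w.getD i 0 + 1) ∧
          b = w.getD i 0) then (1:ℕ) else 0) = 0 := if_neg (by rintro ⟨h1, -, -⟩; omega)
      rw [if_congr hiff rfl rfl, hz, add_zero]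
    · have e1 : (w ++ [b]).getD i 0 = w.getD i 0 := getD_append_lt _ _ _ (by omega)
      have e2 : (w ++ [b]).getD (i+l+1) 0 = b := by
        rw [show i + l + 1 = n from h]; exact getD_append_len w b
      have e3 : (∀ j, j < l → (w ++ [b]).getD (i+1+j) 0 = (w ++ [b]).getD i 0 + 1) ↔
          (∀ j, j < l → w.getD (i+1+j) 0 = w.getD i 0 + 1) := by
        apply forall_congr'; intro j; apply imp_congr_right; intro hj
        rw [getD_append_lt _ _ _ (by omega), e1]
      have hiff : (i + l + 1 < n+1 ∧ (∀ j, j < l → (w ++ [b]).getD (i+1+j) 0 = (w ++ [b]).getD i 0 + 1) ∧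
          (w ++ [b]).getD (i+l+1) 0 = (w ++ [b]).getD i 0) ↔
          (i + l + 1 = n ∧ (∀ j, j < l → w.getD (i+1+j) 0 = w.getD i 0 + 1) ∧
          b = w.getD i 0) := by
        rw [e3]; constructor <;> rintro ⟨h1, h2, h3⟩
        · exact ⟨h, h2, by rw [← e1, ← h3]; exact e2.symm⟩
        · exact ⟨by omega, h2, by rw [e2, e1]; exact h3⟩
      have hz : (if (i + l + 1 < n ∧ (∀ j, j < l → w.getD (i+1+j) 0 = w.getD i 0 + 1) ∧
          w.getD (i+l+1) 0 = w.getD i 0) then (1:ℕ) else 0) = 0 := if_neg (by rintro ⟨h1, -, -⟩; omega)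
      rw [if_congr hiff rfl rfl, hz, zero_add]
    · rw [if_neg (by rintro ⟨h1, -, -⟩; omega), if_neg (by rintro ⟨h1, -, -⟩; omega),
        if_neg (by rintro ⟨h1, -, -⟩; omega)]
  rw [Finset.sum_congr rfl (fun l hl => Finset.sum_congr rfl (fun i hi => key l hl i hi))]
  simp only [Finset.sum_add_distrib]
  congr 1
  · -- first piece: shrink ranges
    rw [outer_drop]
    · apply Finset.sum_congr rfl; intro l hl
      rw [inner_drop]
      rw [if_neg (by rintro ⟨h1, -, -⟩; omega)]
    · apply Finset.sum_eq_zero; intro i hi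
      rw [if_neg (by rintro ⟨h1, -, -⟩; omega)]
  · rw [outer_drop]
    · apply Finset.sum_congr rfl; intro l hl
      simp only [Finset.mem_Icc] at hl
      rw [inner_drop]
      rw [if_neg (by rintro ⟨h1, -, -⟩; omega)]
    · apply Finset.sum_eq_zero; intro i hi
      simp only [Finset.mem_range] at hi
      rw [if_neg (by rintro ⟨h1, -, -⟩; omega)]

lemma newP_eq (w : List ℕ) (b : ℕ) :
    newP w b = if b + 1 = lastL w then pendCount w else 0 := by
  classical
  simp only [newP, pendCount, Finset.card_filter]
  by_cases hb : b + 1 = lastL w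
  · rw [if_pos hb]
    refine Finset.sum_congr rfl (fun l hl => Finset.sum_congr rfl (fun i hi => ?_))
    simp only [Finset.mem_Icc] at hl
    apply if_congr _ rfl rfl
    constructor
    · rintro ⟨h1, h2, h3⟩; exact ⟨h1, h2⟩
    · rintro ⟨h1, h2⟩
      refine ⟨h1, h2, ?_⟩
      have := run_last w i l hl.1 h1 h2
      omega
  · rw [if_neg hb]
    apply Finset.sum_eq_zero; intro l hl
    simp only [Finset.mem_Icc] at hl
    apply Finset.sum_eq_zero; intro i hi
    rw [if_neg]; rintro ⟨h1, h2, h3⟩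
    have := run_last w i l hl.1 h1 h2
    omega

lemma pendCount_append (w : List ℕ) (b : ℕ) (hw : 1 ≤ w.length) :
    pendCount (w ++ [b]) = (if b = lastL w + 1 then 1 else 0) +
      (if b = lastL w then pendCount w else 0) := by
  classical
  have hlen : (w ++ [b]).length = w.length + 1 := by simp
  set n := w.length with hn
  simp only [pendCount, Finset.card_filter, hlen]
  have hsplit : Finset.Icc 1 (n+1) = insert 1 (Finset.Icc 2 (n+1)) := by
    ext x; simp [Finset.mem_Icc, Finset.mem_insert]; omega
  rw [hsplit, Finset.sum_insert (by simp)]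
  congr 1
  · -- l = 1 term
    rw [Finset.sum_eq_single (n-1)]
    · apply if_congr _ rfl rfl
      constructor
      · rintro ⟨h1, h2⟩
        have := h2 0 (by omega)
        have e0 : n - 1 + 1 + 0 = n := by omega
        rw [e0, getD_append_len, getD_append_lt _ _ _ (by omega)] at this
        exact this
      · intro hb
        refine ⟨by omega, ?_⟩
        intro j hj
        have hj0 : j = 0 := by omega
        subst hj0
        have e0 : n - 1 + 1 + 0 = n := by omega
        rw [e0, getD_append_len, getD_append_lt _ _ _ (by omega)]
        exact hb
    · intro i hi hne
      rw [if_neg]; rintro ⟨h1, -⟩; omega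
    · intro h
      exact absurd (Finset.mem_range.mpr (by omega)) h
  · -- l ≥ 2 terms
    rw [← Finset.map_add_right_Icc 1 n 1, Finset.sum_map]
    simp only [addRightEmbedding_apply]
    by_cases hbl : b = lastL w
    · rw [if_pos hbl]
      refine Finset.sum_congr rfl (fun l hl => ?_)
      simp only [Finset.mem_Icc] at hl
      rw [inner_drop _ _ (by rw [if_neg]; rintro ⟨h1, -⟩; omega)]
      refine Finset.sum_congr rfl (fun i hi => ?_)
      simp only [Finset.mem_range] at hi
      apply if_congr _ rfl rfl
      constructor
      · rintro ⟨h1, h2⟩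
        refine ⟨by omega, ?_⟩
        intro j hj
        have := h2 j (by omega)
        rw [getD_append_lt _ _ _ (by omega), getD_append_lt _ _ _ (by omega)] at this
        exact this
      · rintro ⟨h1, h2⟩
        refine ⟨by omega, ?_⟩
        intro j hj
        rcases Nat.lt_or_ge j l with hjl | hjl
        · have := h2 j hjl
          rw [getD_append_lt _ _ _ (by omega), getD_append_lt _ _ _ (by omega)]
          exact this
        · have hjeq : j = l := by omega
          subst hjeq
          have e0 : i + 1 + j = n := by omega
          rw [e0, getD_append_len, getD_append_lt _ _ _ (by omega)]
          have := run_last w i j hl.1 (by omega) h2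
          omega
    · rw [if_neg hbl]
      apply Finset.sum_eq_zero; intro l hl
      simp only [Finset.mem_Icc] at hl
      apply Finset.sum_eq_zero; intro i hi
      simp only [Finset.mem_range] at hi
      rw [if_neg]; rintro ⟨h1, h2⟩
      have hrw : ∀ j, j < l → w.getD (i + 1 + j) 0 = w.getD i 0 + 1 := by
        intro j hj
        have := h2 j (by omega)
        rw [getD_append_lt _ _ _ (by omega), getD_append_lt _ _ _ (by omega)] at this
        exact this
      have hlast := run_last w i l hl.1 (by omega) hrw
      have hb2 := h2 l (by omega)
      have e0 : i + 1 + l = n := by omega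
      rw [e0, getD_append_len, getD_append_lt _ _ _ (by omega)] at hb2
      omega

lemma sum_flatMap' {α β : Type} (l : List α) (g : α → List β) (f : β → ℕ) :
    ((l.flatMap g).map f).sum = (l.map (fun x => ((g x).map f).sum)).sum := by
  rw [List.map_flatMap, List.flatMap_def, List.sum_flatten, List.map_map]; rfl

lemma enum_length : ∀ n, ∀ w ∈ enum (n+1), w.length = n + 1 := by
  intro n
  induction n with
  | zero => intro w hw; simp [enum] at hw; subst hw; rfl
  | succ m ih =>
    intro w hw
    rw [show enum (m+2) = (enum (m+1)).flatMap ext from rfl] at hw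
    obtain ⟨u, hu, hw⟩ := List.mem_flatMap.mp hw
    obtain ⟨b, hb, rfl⟩ := List.mem_map.mp hw
    simp [ih u hu]

lemma enum_last_lt : ∀ n, ∀ w ∈ enum (n+1), lastL w < n + 1 := by
  intro n
  induction n with
  | zero => intro w hw; simp [enum] at hw; subst hw; simp [lastL]
  | succ m ih =>
    intro w hw
    rw [show enum (m+2) = (enum (m+1)).flatMap ext from rfl] at hw
    obtain ⟨u, hu, hw⟩ := List.mem_flatMap.mp hw
    obtain ⟨b, hb, rfl⟩ := List.mem_map.mp hw
    rw [lastL_append]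
    have := ih u hu
    simp only [List.mem_range] at hb
    omega

lemma mem_enum_iff : ∀ n, ∀ w, w ∈ enum (n+1) ↔ w ∈ CatalanWord (n+1) := by
  intro n
  induction n with
  | zero =>
    intro w
    constructor
    · intro hw; simp [enum] at hw; subst hw
      exact ⟨rfl, rfl, by intro i hi; omega⟩
    · rintro ⟨hlen, h0, -⟩
      obtain ⟨a, rfl⟩ := List.length_eq_one_iff.mp hlen
      simp only [List.getD] at h0
      simp [enum]
      simpa using h0
  | succ m ih =>
    intro w
    rw [show enum (m+2) = (enum (m+1)).flatMap ext from rfl]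
    constructor
    · intro hw
      obtain ⟨u, hu, hw⟩ := List.mem_flatMap.mp hw
      obtain ⟨b, hb, rfl⟩ := List.mem_map.mp hw
      have hul : u.length = m + 1 := enum_length m u hu
      obtain ⟨-, h0, hstep⟩ := (ih u).mp hu
      simp only [List.mem_range] at hb
      refine ⟨by simp [hul], ?_, ?_⟩
      · rw [getD_append_lt _ _ _ (by omega)]; exact h0
      · intro i hi
        rcases Nat.lt_or_ge (i+1) (m+1) with h | h
        · rw [getD_append_lt _ _ _ (by omega), getD_append_lt _ _ _ (by omega)]
          exact hstep i h
        · rw [show i + 1 = u.length from by omega, getD_append_len,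
            getD_append_lt _ _ _ (by omega)]
          have h2 : lastL u = u.getD i 0 := by
            rw [lastL, hul]; congr 1; omega
          omega
    · rintro ⟨hlen, h0, hstep⟩
      have hne : w ≠ [] := by intro h; subst h; simp at hlen
      set u := w.dropLast with hu
      set a := w.getLast hne with ha
      have hw : u ++ [a] = w := List.dropLast_append_getLast hne
      have hul : u.length = m + 1 := by simp [hu, hlen]
      have hgd : ∀ k, k < m + 1 → u.getD k 0 = w.getD k 0 := by
        intro k hk
        rw [← hw, getD_append_lt _ _ _ (by omega)]
      have hga : w.getD (m+1) 0 = a := by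
        rw [← hw, show m + 1 = u.length from hul.symm, getD_append_len]
      have humem : u ∈ enum (m+1) := by
        apply (ih u).mpr
        refine ⟨hul, ?_, ?_⟩
        · rw [hgd 0 (by omega)]; exact h0
        · intro i hi
          rw [hgd (i+1) (by omega), hgd i (by omega)]
          exact hstep i (by omega)
      apply List.mem_flatMap.mpr
      refine ⟨u, humem, ?_⟩
      apply List.mem_map.mpr
      refine ⟨a, ?_, hw⟩
      simp only [List.mem_range]
      have hla : lastL u = w.getD m 0 := by rw [lastL, hul]; exact hgd m (by omega)
      have := hstep m (by omega)
      omega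

lemma enum_nodup : ∀ n, (enum (n+1)).Nodup := by
  intro n
  induction n with
  | zero => simp [enum]
  | succ m ih =>
    rw [show enum (m+2) = (enum (m+1)).flatMap ext from rfl]
    apply List.nodup_flatMap.mpr
    constructor
    · intro u hu
      apply List.Nodup.map
      · intro b b' h
        have := List.append_cancel_left h
        simpa using this
      · exact List.nodup_range
    · apply List.Pairwise.imp _ ih
      intro u u' hne
      intro x hx hx'
      obtain ⟨b, hb, rfl⟩ := List.mem_map.mp hx
      obtain ⟨b', hb', he⟩ := List.mem_map.mp hx'
      have := (List.append_inj he.symm (by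
        have h1 : (u ++ [b]).length = u'.length + 1 := by rw [← he]; simp
        have h2 : (u ++ [b]).length = u.length + 1 := by simp
        omega)).1
      exact hne this

lemma sum_map_group (L : List (List ℕ)) (f : List ℕ → ℕ) (n : ℕ)
    (hb : ∀ w ∈ L, lastL w < n) :
    (L.map f).sum = ∑ c ∈ Finset.range n, ((L.filter (fun w => lastL w = c)).map f).sum := by
  classical
  induction L with
  | nil => simp
  | cons w t ih =>
    have hw : lastL w < n := hb w (by simp)
    have ht : ∀ x ∈ t, lastL x < n := fun x hx => hb x (by simp [hx])
    have key : ∀ c ∈ Finset.range n,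
        (((w :: t).filter (fun x => lastL x = c)).map f).sum
        = (if lastL w = c then f w else 0) + ((t.filter (fun x => lastL x = c)).map f).sum := by
      intro c _
      by_cases h : lastL w = c
      · simp [List.filter_cons, h]
      · simp [List.filter_cons, h]
    rw [Finset.sum_congr rfl key, Finset.sum_add_distrib, ← ih ht,
      Finset.sum_ite_eq (Finset.range n) (lastL w) (fun _ => f w),
      if_pos (Finset.mem_range.mpr hw)]
    simp

def gsum (f : List ℕ → ℕ) (n c : ℕ) : ℕ :=
  (((enum n).filter (fun w => lastL w = c)).map f).sum

lemma gsum_vanish (f : List ℕ → ℕ) (n c : ℕ) (h : n + 1 ≤ c) : gsum f (n+1) c = 0 := by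
  rw [gsum]
  have : (enum (n+1)).filter (fun w => lastL w = c) = [] := by
    apply List.filter_eq_nil_iff.mpr
    intro w hw
    have := enum_last_lt n w hw
    simp only [decide_eq_true_eq]
    omega
  rw [this]; rfl

lemma total_eq_gsum (f : List ℕ → ℕ) (n : ℕ) :
    ((enum (n+1)).map f).sum = ∑ c ∈ Finset.range (n+1), gsum f (n+1) c :=
  sum_map_group _ _ _ (enum_last_lt n)

lemma gsum_succ (f : List ℕ → ℕ) (F : List ℕ → ℕ → ℕ) (n : ℕ)
    (hF : ∀ w ∈ enum (n+1), ∀ b, b ≤ lastL w + 1 → f (w ++ [b]) = F w b) (c : ℕ) :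
    gsum f (n+2) c = ∑ a ∈ Finset.range (n+1), (if c ≤ a + 1 then
      (((enum (n+1)).filter (fun w => lastL w = a)).map (fun w => F w c)).sum else 0) := by
  classical
  rw [gsum, show enum (n+2) = (enum (n+1)).flatMap ext from rfl,
    List.filter_flatMap, sum_flatMap']
  have key : ∀ u ∈ enum (n+1),
      ((((ext u).filter (fun w => lastL w = c)).map f).sum : ℕ)
      = if c ≤ lastL u + 1 then f (u ++ [c]) else 0 := by
    intro u hu
    rw [ext, List.filter_map]
    have hpred : (List.range (lastL u + 2)).filter
        ((fun w => decide (lastL w = c)) ∘ (fun b => u ++ [b]))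
        = (List.range (lastL u + 2)).filter (fun b => decide (b = c)) := by
      apply List.filter_congr
      intro b _
      simp [lastL_append]
    rw [hpred, List.filter_eq]
    have hcount : (List.range (lastL u + 2)).count c = if c < lastL u + 2 then 1 else 0 := by
      rcases Nat.lt_or_ge c (lastL u + 2) with h | h
      · rw [List.count_eq_one_of_mem (List.nodup_range) (by simpa using h), if_pos h]
      · rw [List.count_eq_zero_of_not_mem (by simpa using Nat.not_lt.mpr h),
          if_neg (Nat.not_lt.mpr h)]
    rw [hcount]
    by_cases h : c < lastL u + 2
    · rw [if_pos h, if_pos (by omega)]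
      simp
    · rw [if_neg h, if_neg (by omega)]
      simp
  rw [List.map_congr_left key]
  have key2 : ∀ u ∈ enum (n+1),
      (if c ≤ lastL u + 1 then f (u ++ [c]) else 0)
      = (fun u => if c ≤ lastL u + 1 then F u c else 0) u := by
    intro u hu
    show (if c ≤ lastL u + 1 then f (u ++ [c]) else 0) = (if c ≤ lastL u + 1 then F u c else 0)
    by_cases h : c ≤ lastL u + 1
    · rw [if_pos h, if_pos h, hF u hu c h]
    · rw [if_neg h, if_neg h]
  rw [List.map_congr_left key2,
    sum_map_group _ _ (n+1) (enum_last_lt n)]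
  apply Finset.sum_congr rfl
  intro a _
  by_cases h : c ≤ a + 1
  · rw [if_pos h]
    apply congrArg
    apply List.map_congr_left
    intro w hw
    have hwa : lastL w = a := by
      have := List.of_mem_filter hw
      simpa using this
    rw [hwa, if_pos h]
  · rw [if_neg h]
    have : ∀ w ∈ (enum (n+1)).filter (fun w => lastL w = a),
        (if c ≤ lastL w + 1 then F w c else 0) = 0 := by
      intro w hw
      have hwa : lastL w = a := by
        have := List.of_mem_filter hw
        simpa using this
      rw [hwa, if_neg h]
    rw [List.map_congr_left this]
    simp

def Aq (n c : ℕ) : ℕ := gsum (fun _ => 1) n c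
def Rq (n c : ℕ) : ℕ := gsum pendCount n c
def Pq (n c : ℕ) : ℕ := gsum symPeaks n c

lemma sum_single_eq (n : ℕ) (X : ℕ → ℕ) (c : ℕ) (hX : ∀ a, n ≤ a → X a = 0) :
    (∑ a ∈ Finset.range n, if c = a then X a else 0) = X c := by
  classical
  rw [Finset.sum_ite_eq]
  rcases Nat.lt_or_ge c n with h | h
  · rw [if_pos (Finset.mem_range.mpr h)]
  · rw [if_neg (by simp; omega), hX c h]

lemma Aq_vanish (n c : ℕ) (h : n + 1 ≤ c) : Aq (n+1) c = 0 := gsum_vanish _ n c h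
lemma Rq_vanish (n c : ℕ) (h : n + 1 ≤ c) : Rq (n+1) c = 0 := gsum_vanish _ n c h
lemma Pq_vanish (n c : ℕ) (h : n + 1 ≤ c) : Pq (n+1) c = 0 := gsum_vanish _ n c h

lemma Aq_succ (n c : ℕ) :
    Aq (n+2) c = ∑ a ∈ Finset.range (n+1), (if c ≤ a + 1 then Aq (n+1) a else 0) := by
  rw [Aq, gsum_succ (fun _ => 1) (fun _ _ => 1) n (fun w hw b hb => rfl) c]
  rfl

lemma Rq_succ (n c : ℕ) :
    Rq (n+2) c = Rq (n+1) c + (if 1 ≤ c then Aq (n+1) (c-1) else 0) := by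
  classical
  rw [Rq, gsum_succ pendCount
    (fun w b => (if b = lastL w + 1 then 1 else 0) + (if b = lastL w then pendCount w else 0)) n
    (fun w hw b hb => pendCount_append w b (by rw [enum_length n w hw]; omega)) c]
  have key : ∀ a ∈ Finset.range (n+1),
      (if c ≤ a + 1 then
        (((enum (n+1)).filter (fun w => lastL w = a)).map
          (fun w => (if c = lastL w + 1 then 1 else 0) +
            (if c = lastL w then pendCount w else 0))).sum else 0)
      = (if c = a + 1 then Aq (n+1) a else 0) + (if c = a then Rq (n+1) a else 0) := by
    intro a _
    have hmc : ∀ w ∈ (enum (n+1)).filter (fun w => lastL w = a),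
        ((if c = lastL w + 1 then 1 else 0) + (if c = lastL w then pendCount w else 0) : ℕ)
        = (if c = a + 1 then 1 else 0) + (if c = a then pendCount w else 0) := by
      intro w hw
      have hwa : lastL w = a := by simpa using List.of_mem_filter hw
      rw [hwa]
    have hA : (List.map (fun _ => if c = a + 1 then (1:ℕ) else 0)
        ((enum (n+1)).filter (fun w => lastL w = a))).sum
        = (if c = a + 1 then Aq (n+1) a else 0) := by
      by_cases h1 : c = a + 1
      · simp only [if_pos h1]; rfl
      · simp only [if_neg h1]; simp
    have hR : (List.map (fun w => if c = a then pendCount w else 0)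
        ((enum (n+1)).filter (fun w => lastL w = a))).sum
        = (if c = a then Rq (n+1) a else 0) := by
      by_cases h2 : c = a
      · simp only [if_pos h2]; rfl
      · simp only [if_neg h2]; simp
    by_cases h : c ≤ a + 1
    · rw [if_pos h, List.map_congr_left hmc, List.sum_map_add, hA, hR]
    · rw [if_neg h, if_neg (by omega), if_neg (by omega)]
  rw [Finset.sum_congr rfl key, Finset.sum_add_distrib]
  have e2 : (∑ a ∈ Finset.range (n+1), if c = a then Rq (n+1) a else 0) = Rq (n+1) c :=
    sum_single_eq (n+1) _ c (fun a ha => Rq_vanish n a ha)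
  have e1 : (∑ a ∈ Finset.range (n+1), if c = a + 1 then Aq (n+1) a else 0)
      = if 1 ≤ c then Aq (n+1) (c-1) else 0 := by
    by_cases hc : 1 ≤ c
    · rw [if_pos hc]
      have : ∀ a ∈ Finset.range (n+1), (if c = a + 1 then Aq (n+1) a else 0)
          = (if c - 1 = a then Aq (n+1) a else 0) := by
        intro a _
        apply if_congr _ rfl rfl
        omega
      rw [Finset.sum_congr rfl this]
      exact sum_single_eq (n+1) _ (c-1) (fun a ha => Aq_vanish n a ha)
    · rw [if_neg hc]
      apply Finset.sum_eq_zero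
      intro a _
      rw [if_neg (by omega)]
  rw [e1, e2, Nat.add_comm]

lemma Pq_succ (n c : ℕ) :
    Pq (n+2) c = (∑ a ∈ Finset.range (n+1), (if c ≤ a + 1 then Pq (n+1) a else 0))
      + Rq (n+1) (c+1) := by
  classical
  rw [Pq, gsum_succ symPeaks
    (fun w b => symPeaks w + (if b + 1 = lastL w then pendCount w else 0)) n
    (fun w hw b hb => by rw [symPeaks_append, newP_eq]) c]
  have key : ∀ a ∈ Finset.range (n+1),
      (if c ≤ a + 1 then
        (((enum (n+1)).filter (fun w => lastL w = a)).map
          (fun w => symPeaks w + (if c + 1 = lastL w then pendCount w else 0))).sum else 0)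
      = (if c ≤ a + 1 then Pq (n+1) a else 0) + (if c + 1 = a then Rq (n+1) a else 0) := by
    intro a _
    have hmc : ∀ w ∈ (enum (n+1)).filter (fun w => lastL w = a),
        (symPeaks w + (if c + 1 = lastL w then pendCount w else 0) : ℕ)
        = symPeaks w + (if c + 1 = a then pendCount w else 0) := by
      intro w hw
      have hwa : lastL w = a := by simpa using List.of_mem_filter hw
      rw [hwa]
    have hR : (List.map (fun w => if c + 1 = a then pendCount w else 0)
        ((enum (n+1)).filter (fun w => lastL w = a))).sum
        = (if c + 1 = a then Rq (n+1) a else 0) := by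
      by_cases h2 : c + 1 = a
      · simp only [if_pos h2]; rfl
      · simp only [if_neg h2]; simp
    by_cases h : c ≤ a + 1
    · rw [if_pos h, List.map_congr_left hmc, List.sum_map_add, if_pos h, hR]; rfl
    · rw [if_neg h, if_neg h, if_neg (by omega)]
  rw [Finset.sum_congr rfl key, Finset.sum_add_distrib]
  congr 1
  exact sum_single_eq (n+1) _ (c+1) (fun a ha => Rq_vanish n a ha)

/-! ### Arithmetic layer -/

def CBz (n c : ℕ) : ℕ :=
  if c < n then Nat.choose (2*n - c - 2) (n-1) - Nat.choose (2*n - c - 2) n else 0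

def rF (n c : ℕ) : ℕ := if 1 ≤ c then ∑ m ∈ Finset.range n, CBz m (c-1) else 0

def QF (n c : ℕ) : ℕ := (c+1) * ∑ k ∈ Finset.range (n - c - 2), Nat.choose (2*k + c) k

def DF (n a : ℕ) : ℕ :=
  if a + 2 ≤ n then (a+1) * Nat.choose (2*n - a - 4) (n - a - 2) else 0

lemma choose_decr (m k : ℕ) (h : m ≤ 2*k + 1) : Nat.choose m (k+1) ≤ Nat.choose m k := by
  have h1 := Nat.choose_succ_right_eq m k
  have h2 : m - k ≤ k + 1 := by omega
  have h3 : Nat.choose m (k+1) * (k+1) ≤ Nat.choose m k * (k+1) := by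
    calc Nat.choose m (k+1) * (k+1) = Nat.choose m k * (m - k) := h1
    _ ≤ Nat.choose m k * (k+1) := Nat.mul_le_mul_left _ h2
  exact Nat.le_of_mul_le_mul_right h3 (by omega)

lemma CBz_top (n : ℕ) : CBz (n+1) n = 1 := by
  rw [CBz, if_pos (by omega)]
  have e : 2*(n+1) - n - 2 = n := by omega
  have e2 : n + 1 - 1 = n := by omega
  rw [e, e2, Nat.choose_self, Nat.choose_eq_zero_of_lt (by omega)]

lemma CBz_big (n c : ℕ) (h : n ≤ c) : CBz n c = 0 := by
  rw [CBz, if_neg (by omega)]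

-- Pascal 2-step for ballot numbers
lemma pascal_idx (M k M' k' : ℕ) (hM : M' = M + 1) (hk : k' = k + 1) :
    Nat.choose M' k' = Nat.choose M k + Nat.choose M (k+1) := by
  subst hM; subst hk; exact Nat.choose_succ_succ _ _

lemma PL (n c : ℕ) (hc : 1 ≤ c) :
    CBz (n+1) c = CBz (n+1) (c+1) + CBz n (c-1) := by
  rcases Nat.lt_trichotomy c n with h | h | h
  · -- interior: 1 ≤ c < n
    have e1 : 2*(n+1) - c - 2 = 2*n - c := by omega
    have e2 : 2*(n+1) - (c+1) - 2 = 2*n - c - 1 := by omega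
    have e3 : 2*n - (c-1) - 2 = 2*n - c - 1 := by omega
    have e4 : n + 1 - 1 = n := by omega
    rw [CBz, CBz, CBz, if_pos (by omega), if_pos (by omega), if_pos (by omega), e1, e2, e3, e4]
    have p1 : Nat.choose (2*n - c) n
        = Nat.choose (2*n - c - 1) (n-1) + Nat.choose (2*n - c - 1) ((n-1)+1) :=
      pascal_idx _ _ _ _ (by omega) (by omega)
    have p2 : Nat.choose (2*n - c) (n+1)
        = Nat.choose (2*n - c - 1) n + Nat.choose (2*n - c - 1) (n+1) :=
      pascal_idx _ _ _ _ (by omega) rfl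
    have e6 : (n-1) + 1 = n := by omega
    rw [e6] at p1
    have m1 : Nat.choose (2*n - c - 1) n ≤ Nat.choose (2*n - c - 1) (n-1) := by
      have := choose_decr (2*n - c - 1) (n-1) (by omega)
      rwa [e6] at this
    have m2 : Nat.choose (2*n - c - 1) (n+1) ≤ Nat.choose (2*n - c - 1) n :=
      choose_decr (2*n - c - 1) n (by omega)
    omega
  · -- c = n
    subst h
    obtain ⟨m, rfl⟩ : ∃ m, c = m + 1 := ⟨c - 1, by omega⟩
    rw [CBz_top, CBz_big (m+2) (m+2) (le_refl _), Nat.add_sub_cancel, CBz_top]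
  · rw [CBz_big (n+1) c (by omega), CBz_big (n+1) (c+1) (by omega), CBz_big n (c-1) (by omega)]

lemma PL0 (n : ℕ) : CBz (n+2) 0 = CBz (n+2) 1 := by
  have e1 : 2*(n+2) - 0 - 2 = 2*(n+1) := by omega
  have e2 : 2*(n+2) - 1 - 2 = 2*(n+1) - 1 := by omega
  have e4 : n + 2 - 1 = n + 1 := by omega
  rw [CBz, CBz, if_pos (by omega), if_pos (by omega), e1, e2, e4]
  have p1 : Nat.choose (2*(n+1)) (n+1)
      = Nat.choose (2*(n+1) - 1) n + Nat.choose (2*(n+1) - 1) (n+1) :=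
    pascal_idx (2*(n+1) - 1) n _ _ (by omega) (by omega)
  have p2 : Nat.choose (2*(n+1)) (n+2)
      = Nat.choose (2*(n+1) - 1) (n+1) + Nat.choose (2*(n+1) - 1) (n+2) :=
    pascal_idx (2*(n+1) - 1) (n+1) _ _ (by omega) (by omega)
  have s1 : Nat.choose (2*(n+1) - 1) n = Nat.choose (2*(n+1) - 1) (n+1) := by
    have h := Nat.choose_symm (n := 2*(n+1) - 1) (k := n+1) (by omega)
    have e : 2*(n+1) - 1 - (n+1) = n := by omega
    rwa [e] at h
  have m1 : Nat.choose (2*(n+1) - 1) (n+2) ≤ Nat.choose (2*(n+1) - 1) (n+1) :=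
    choose_decr (2*(n+1) - 1) (n+1) (by omega)
  omega

lemma descend (n : ℕ) (P : ℕ → Prop) (base : ∀ c, n ≤ c → P c)
    (step : ∀ c, c < n → P (c+1) → P c) : ∀ c, P c := by
  have key : ∀ k c, n ≤ c + k → P c := by
    intro k
    induction k with
    | zero => intro c h; exact base c (by omega)
    | succ m ih =>
      intro c h
      by_cases h2 : n ≤ c + m
      · exact ih c h2
      · exact step c (by omega) (ih (c+1) (by omega))
  intro c
  exact key n c (by omega)

lemma A_id (n : ℕ) : ∀ c,
    (∑ a ∈ Finset.range (n+1), if c ≤ a + 1 then CBz (n+1) a else 0) = CBz (n+2) c := by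
  apply descend (n+2)
  · -- base : c ≥ n+2
    intro c hc
    rw [CBz_big (n+2) c hc]
    apply Finset.sum_eq_zero
    intro a ha
    simp only [Finset.mem_range] at ha
    rw [if_neg (by omega)]
  · -- step
    intro c hc ih
    rcases Nat.eq_zero_or_pos c with rfl | hc1
    · -- c = 0 : same sum as c = 1
      have : ∀ a ∈ Finset.range (n+1), (if 0 ≤ a + 1 then CBz (n+1) a else 0)
          = (if 1 ≤ a + 1 then CBz (n+1) a else 0) := by
        intro a _
        rw [if_pos (by omega), if_pos (by omega)]
      rw [Finset.sum_congr rfl this, ih, PL0]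
    · -- c ≥ 1
      have split : ∀ a ∈ Finset.range (n+1), (if c ≤ a + 1 then CBz (n+1) a else 0)
          = (if c + 1 ≤ a + 1 then CBz (n+1) a else 0)
            + (if c - 1 = a then CBz (n+1) a else 0) := by
        intro a _
        rcases Nat.lt_trichotomy a (c-1) with h | h | h
        · rw [if_neg (by omega), if_neg (by omega), if_neg (by omega)]
        · rw [if_pos (by omega), if_neg (by omega), if_pos (by omega)]; omega
        · rw [if_pos (by omega), if_pos (by omega), if_neg (by omega)]; omega
      rw [Finset.sum_congr rfl split, Finset.sum_add_distrib, ih,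
        Finset.sum_ite_eq (Finset.range (n+1)) (c-1) (fun a => CBz (n+1) a),
        if_pos (Finset.mem_range.mpr (by omega))]
      exact (PL (n+1) c hc1).symm

lemma QF_succ (m a : ℕ) : QF (m+1) a = QF m a + DF m a := by
  by_cases h : a + 2 ≤ m
  · rw [DF, if_pos h, QF, QF]
    have e : m + 1 - a - 2 = (m - a - 2) + 1 := by omega
    rw [e, Finset.sum_range_succ, Nat.mul_add]
    have e2 : 2*(m - a - 2) + a = 2*m - a - 4 := by omega
    rw [e2]
  · rw [DF, if_neg h, QF, QF, add_zero, show m + 1 - a - 2 = m - a - 2 by omega]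

lemma QF_top (m : ℕ) : QF (m+1) m = 0 := by
  rw [QF, show m + 1 - m - 2 = 0 by omega]
  simp

lemma rF_succ (n c : ℕ) : rF (n+1) c = rF n c + (if 1 ≤ c then CBz n (c-1) else 0) := by
  by_cases hc : 1 ≤ c
  · rw [rF, rF, if_pos hc, if_pos hc, if_pos hc, Finset.sum_range_succ]
  · rw [rF, rF, if_neg hc, if_neg hc, if_neg hc]

lemma key0 (n : ℕ) : DF (n+2) 0 + CBz (n+1) 1 = DF (n+2) 1 + CBz (n+1) 0 := by
  rcases Nat.eq_zero_or_pos n with rfl | hn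
  · decide
  · have hd0 : DF (n+2) 0 = Nat.choose (2*n) n := by
      rw [DF, if_pos (by omega)]
      have e1 : 2*(n+2) - 0 - 4 = 2*n := by omega
      have e2 : n + 2 - 0 - 2 = n := by omega
      rw [e1, e2]; omega
    have hd1 : DF (n+2) 1 = 2 * Nat.choose (2*n - 1) (n-1) := by
      rw [DF, if_pos (by omega)]
      have e1 : 2*(n+2) - 1 - 4 = 2*n - 1 := by omega
      have e2 : n + 2 - 1 - 2 = n - 1 := by omega
      rw [e1, e2]
    have hc1 : CBz (n+1) 1 = Nat.choose (2*n - 1) n - Nat.choose (2*n - 1) (n+1) := by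
      rw [CBz, if_pos (by omega)]
      have e1 : 2*(n+1) - 1 - 2 = 2*n - 1 := by omega
      have e2 : n + 1 - 1 = n := by omega
      rw [e1, e2]
    have hc0 : CBz (n+1) 0 = Nat.choose (2*n) n - Nat.choose (2*n) (n+1) := by
      rw [CBz, if_pos (by omega)]
      have e1 : 2*(n+1) - 0 - 2 = 2*n := by omega
      have e2 : n + 1 - 1 = n := by omega
      rw [e1, e2]
    rw [hd0, hd1, hc1, hc0]
    have p2 : Nat.choose (2*n) (n+1)
        = Nat.choose (2*n - 1) n + Nat.choose (2*n - 1) (n+1) :=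
      pascal_idx (2*n - 1) n _ _ (by omega) rfl
    have s1 : Nat.choose (2*n - 1) (n-1) = Nat.choose (2*n - 1) n := by
      have h := Nat.choose_symm (n := 2*n - 1) (k := n) (by omega)
      have e : 2*n - 1 - n = n - 1 := by omega
      rwa [e] at h
    have m1 : Nat.choose (2*n - 1) (n+1) ≤ Nat.choose (2*n - 1) n :=
      choose_decr (2*n - 1) n (by omega)
    have m2 : Nat.choose (2*n) (n+1) ≤ Nat.choose (2*n) n := by
      have := choose_decr (2*n) n (by omega)
      exact this
    omega

lemma key (n c : ℕ) (hc1 : 1 ≤ c) (hcn : c ≤ n) :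
    DF (n+2) (c+1) + DF (n+1) (c-1) + CBz (n+1) c = DF (n+2) c + CBz (n+1) (c+1) := by
  rcases Nat.lt_or_ge c n with h | h
  · -- interior : 1 ≤ c < n
    have hd1 : DF (n+2) (c+1) = (c+2) * Nat.choose (2*n - c - 1) (n - c - 1) := by
      rw [DF, if_pos (by omega)]
      have e1 : 2*(n+2) - (c+1) - 4 = 2*n - c - 1 := by omega
      have e2 : n + 2 - (c+1) - 2 = n - c - 1 := by omega
      rw [e1, e2]
    have hd2 : DF (n+1) (c-1) = c * Nat.choose (2*n - c - 1) (n - c) := by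
      rw [DF, if_pos (by omega)]
      have e1 : 2*(n+1) - (c-1) - 4 = 2*n - c - 1 := by omega
      have e2 : n + 1 - (c-1) - 2 = n - c := by omega
      have e3 : c - 1 + 1 = c := by omega
      rw [e1, e2, e3]
    have hc : CBz (n+1) c = Nat.choose (2*n - c) n - Nat.choose (2*n - c) (n+1) := by
      rw [CBz, if_pos (by omega)]
      have e1 : 2*(n+1) - c - 2 = 2*n - c := by omega
      have e2 : n + 1 - 1 = n := by omega
      rw [e1, e2]
    have hd3 : DF (n+2) c = (c+1) * Nat.choose (2*n - c) (n - c) := by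
      rw [DF, if_pos (by omega)]
      have e1 : 2*(n+2) - c - 4 = 2*n - c := by omega
      have e2 : n + 2 - c - 2 = n - c := by omega
      rw [e1, e2]
    have hcc : CBz (n+1) (c+1) = Nat.choose (2*n - c - 1) n - Nat.choose (2*n - c - 1) (n+1) := by
      rw [CBz, if_pos (by omega)]
      have e1 : 2*(n+1) - (c+1) - 2 = 2*n - c - 1 := by omega
      have e2 : n + 1 - 1 = n := by omega
      rw [e1, e2]
    rw [hd1, hd2, hc, hd3, hcc]
    have hp1 : Nat.choose (2*n - c) (n - c)
        = Nat.choose (2*n - c - 1) (n - c - 1) + Nat.choose (2*n - c - 1) (n - c) := by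
      have h0 := pascal_idx (2*n - c - 1) (n - c - 1) (2*n - c) (n - c) (by omega) (by omega)
      rwa [show n - c - 1 + 1 = n - c by omega] at h0
    have hp2 : Nat.choose (2*n - c) n
        = Nat.choose (2*n - c - 1) (n-1) + Nat.choose (2*n - c - 1) n := by
      have h0 := pascal_idx (2*n - c - 1) (n-1) (2*n - c) n (by omega) (by omega)
      rwa [show n - 1 + 1 = n by omega] at h0
    have hp3 : Nat.choose (2*n - c) (n+1)
        = Nat.choose (2*n - c - 1) n + Nat.choose (2*n - c - 1) (n+1) :=
      pascal_idx (2*n - c - 1) n _ _ (by omega) rfl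
    have s1 : Nat.choose (2*n - c - 1) (n - c - 1) = Nat.choose (2*n - c - 1) n := by
      have h0 := Nat.choose_symm (n := 2*n - c - 1) (k := n) (by omega)
      have e : 2*n - c - 1 - n = n - c - 1 := by omega
      rwa [e] at h0
    have s2 : Nat.choose (2*n - c - 1) (n - c) = Nat.choose (2*n - c - 1) (n-1) := by
      have h0 := Nat.choose_symm (n := 2*n - c - 1) (k := n-1) (by omega)
      have e : 2*n - c - 1 - (n-1) = n - c := by omega
      rwa [e] at h0
    have m2 : Nat.choose (2*n - c - 1) (n+1) ≤ Nat.choose (2*n - c - 1) n :=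
      choose_decr (2*n - c - 1) n (by omega)
    have m3 : Nat.choose (2*n - c - 1) n ≤ Nat.choose (2*n - c - 1) (n-1) := by
      have h0 := choose_decr (2*n - c - 1) (n-1) (by omega)
      rwa [show n - 1 + 1 = n by omega] at h0
    rw [hp1, hp2, hp3, s1, s2]
    have hle1 : Nat.choose (2*n - c - 1) n + Nat.choose (2*n - c - 1) (n+1)
        ≤ Nat.choose (2*n - c - 1) (n-1) + Nat.choose (2*n - c - 1) n := by omega
    zify [hle1, m2]
    ring
  · -- c = n
    have hcn' : c = n := by omega
    subst hcn'
    have hd1 : DF (c+2) (c+1) = 0 := by rw [DF, if_neg (by omega)]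
    have hd2 : DF (c+1) (c-1) = c := by
      rw [DF, if_pos (by omega)]
      have e1 : 2*(c+1) - (c-1) - 4 = c - 1 := by omega
      have e2 : c + 1 - (c-1) - 2 = 0 := by omega
      have e3 : c - 1 + 1 = c := by omega
      rw [e1, e2, e3, Nat.choose_zero_right, Nat.mul_one]
    have hd3 : DF (c+2) c = c + 1 := by
      rw [DF, if_pos (by omega)]
      have e1 : 2*(c+2) - c - 4 = c := by omega
      have e2 : c + 2 - c - 2 = 0 := by omega
      rw [e1, e2, Nat.choose_zero_right, Nat.mul_one]
    rw [hd1, hd2, hd3, CBz_top, CBz_big (c+1) (c+1) (le_refl _)]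
    omega
lemma Cp_id (n : ℕ) : ∀ c,
    (∑ a ∈ Finset.range (n+1), if c ≤ a + 1 then DF (n+1) a else 0) + CBz (n+1) c
      = DF (n+2) c := by
  apply descend (n+1)
  · intro c hc
    have h1 : (∑ a ∈ Finset.range (n+1), if c ≤ a + 1 then DF (n+1) a else 0) = 0 := by
      apply Finset.sum_eq_zero
      intro a ha
      simp only [Finset.mem_range] at ha
      by_cases h : c ≤ a + 1
      · have : a = n := by omega
        rw [if_pos h, this, DF, if_neg (by omega)]
      · rw [if_neg h]
    rw [h1, CBz_big (n+1) c (by omega), DF, if_neg (by omega)]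
  · intro c hc ih
    rcases Nat.eq_zero_or_pos c with rfl | hc1
    · have hs : (∑ a ∈ Finset.range (n+1), if 0 ≤ a + 1 then DF (n+1) a else 0)
          = (∑ a ∈ Finset.range (n+1), if 1 ≤ a + 1 then DF (n+1) a else 0) := by
        apply Finset.sum_congr rfl
        intro a _
        rw [if_pos (by omega), if_pos (by omega)]
      have hk := key0 n
      have hih := ih
      simp only [zero_add] at hih
      rw [hs]
      omega
    · have split : ∀ a ∈ Finset.range (n+1), (if c ≤ a + 1 then DF (n+1) a else 0)
          = (if c + 1 ≤ a + 1 then DF (n+1) a else 0)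
            + (if c - 1 = a then DF (n+1) a else 0) := by
        intro a _
        rcases Nat.lt_trichotomy a (c-1) with h | h | h
        · rw [if_neg (by omega), if_neg (by omega), if_neg (by omega)]
        · rw [if_pos (by omega), if_neg (by omega), if_pos (by omega)]; omega
        · rw [if_pos (by omega), if_pos (by omega), if_neg (by omega)]; omega
      rw [Finset.sum_congr rfl split, Finset.sum_add_distrib,
        Finset.sum_ite_eq (Finset.range (n+1)) (c-1) (fun a => DF (n+1) a),
        if_pos (Finset.mem_range.mpr (by omega))]
      have hk := key n c hc1 (by omega)
      omega
lemma C_id (n : ℕ) : ∀ c,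
    (∑ a ∈ Finset.range (n+1), if c ≤ a + 1 then QF (n+1) a else 0) + rF (n+1) (c+1)
      = QF (n+2) c := by
  induction n with
  | zero =>
    intro c
    have h1 : QF 1 0 = 0 := by rw [QF]; simp
    have h2 : rF 1 (c+1) = 0 := by
      rw [rF, if_pos (by omega)]
      rw [Finset.sum_range_one, CBz_big 0 (c+1-1) (by omega)]
    have h3 : QF 2 c = 0 := by
      rw [QF, show 2 - c - 2 = 0 by omega]; simp
    rw [h2, h3, Finset.sum_range_one, h1, ite_self]
  | succ m ih =>
    intro c
    have hsucc : ∀ a ∈ Finset.range (m+1), (if c ≤ a + 1 then QF (m+2) a else 0)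
        = (if c ≤ a + 1 then QF (m+1) a else 0) + (if c ≤ a + 1 then DF (m+1) a else 0) := by
      intro a _
      by_cases h : c ≤ a + 1
      · rw [if_pos h, if_pos h, if_pos h, QF_succ]
      · rw [if_neg h, if_neg h, if_neg h]
    rw [Finset.sum_range_succ]
    have htop : (if c ≤ m + 1 + 1 then QF (m+2) (m+1) else 0) = 0 := by
      rw [QF_top]; simp
    rw [htop, add_zero, Finset.sum_congr rfl hsucc, Finset.sum_add_distrib]
    have hr : rF (m+2) (c+1) = rF (m+1) (c+1) + CBz (m+1) c := by
      rw [rF_succ, if_pos (by omega), show c + 1 - 1 = c by omega]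
    have hq : QF (m+1+2) c = QF (m+2) c + DF (m+2) c := QF_succ (m+2) c
    have hih := ih c
    have hcp := Cp_id m c
    rw [hr]
    omega

lemma HS1 (m j : ℕ) : (∑ k ∈ Finset.range (j+1), Nat.choose (m+k) k) = Nat.choose (m+j+1) j := by
  induction j with
  | zero => simp
  | succ i ih =>
    rw [Finset.sum_range_succ, ih]
    have h0 := pascal_idx (m+i+1) i (m+(i+1)+1) (i+1) (by omega) rfl
    have e : m + (i+1) = m + i + 1 := by omega
    rw [e] at h0 ⊢
    omega

lemma EX (f : ℕ → ℕ) (m : ℕ) :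
    (∑ j ∈ Finset.range (m+1), ∑ k ∈ Finset.range (j+1), f k)
      = ∑ k ∈ Finset.range (m+1), (m+1-k) * f k := by
  induction m with
  | zero => simp
  | succ i ih =>
    have per : ∀ k ∈ Finset.range (i+2), (i+2-k) * f k = (i+1-k) * f k + f k := by
      intro k hk
      simp only [Finset.mem_range] at hk
      rw [show i + 2 - k = (i+1-k) + 1 by omega, Nat.add_mul, Nat.one_mul]
    have h1 : (∑ j ∈ Finset.range (i+2), ∑ k ∈ Finset.range (j+1), f k)
        = (∑ j ∈ Finset.range (i+1), ∑ k ∈ Finset.range (j+1), f k)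
          + ∑ k ∈ Finset.range (i+2), f k := Finset.sum_range_succ _ _
    rw [h1, ih]
    have h2 : (∑ k ∈ Finset.range (i+2), (i+2-k) * f k)
        = ∑ k ∈ Finset.range (i+2), ((i+1-k) * f k + f k) := Finset.sum_congr rfl per
    rw [h2, Finset.sum_add_distrib]
    have h3 : (∑ k ∈ Finset.range (i+2), (i+1-k) * f k)
        = (∑ k ∈ Finset.range (i+1), (i+1-k) * f k) + (i+1-(i+1)) * f (i+1) :=
      Finset.sum_range_succ _ _
    rw [h3, show i + 1 - (i+1) = 0 by omega, Nat.zero_mul, add_zero]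

lemma HS2 (m : ℕ) :
    (∑ k ∈ Finset.range (m+1), (m+1-k) * Nat.choose (m+k) k) = Nat.choose (2*m+2) m := by
  rw [← EX]
  have per : ∀ j ∈ Finset.range (m+1),
      (∑ k ∈ Finset.range (j+1), Nat.choose (m+k) k) = Nat.choose ((m+1)+j) j := by
    intro j _
    rw [HS1]
    congr 1
    omega
  rw [Finset.sum_congr rfl per, HS1 (m+1) m]
  congr 1
  omega

lemma starstar (n : ℕ) :
    (∑ c ∈ Finset.range (n+2), DF (n+2) c) = Nat.choose (2*n+2) n := by
  rw [Finset.sum_range_succ, show DF (n+2) (n+1) = 0 by rw [DF, if_neg (by omega)], add_zero]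
  have hrefl := Finset.sum_range_reflect (fun c => DF (n+2) c) (n+1)
  rw [← hrefl]
  have per : ∀ j ∈ Finset.range (n+1),
      DF (n+2) (n + 1 - 1 - j) = (n+1-j) * Nat.choose (n+j) j := by
    intro j hj
    simp only [Finset.mem_range] at hj
    have e0 : n + 1 - 1 - j = n - j := by omega
    rw [e0, DF, if_pos (by omega)]
    have e1 : 2*(n+2) - (n-j) - 4 = n + j := by omega
    have e2 : n + 2 - (n-j) - 2 = j := by omega
    have e3 : n - j + 1 = n + 1 - j := by omega
    rw [e1, e2, e3]
  rw [Finset.sum_congr rfl per, HS2]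

lemma F_id (n : ℕ) :
    (∑ c ∈ Finset.range (n+1), QF (n+1) c)
      = ∑ k ∈ Finset.range (n+1-2), Nat.choose (2*k+2) k := by
  induction n with
  | zero => rw [Finset.sum_range_one, show QF 1 0 = 0 by rw [QF]; simp]; simp
  | succ m ih =>
    rw [Finset.sum_range_succ, QF_top, add_zero]
    have per : ∀ c ∈ Finset.range (m+1), QF (m+2) c = QF (m+1) c + DF (m+1) c := by
      intro c _; exact QF_succ (m+1) c
    rw [Finset.sum_congr rfl per, Finset.sum_add_distrib, ih]
    rcases Nat.eq_zero_or_pos m with rfl | hm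
    · have : (∑ c ∈ Finset.range 1, DF 1 c) = 0 := by
        rw [Finset.sum_range_one, DF, if_neg (by omega)]
      rw [this]
      simp
    · obtain ⟨m', rfl⟩ : ∃ m', m = m' + 1 := ⟨m - 1, by omega⟩
      rw [starstar m']
      have e1 : m' + 1 + 1 + 1 - 2 = (m' + 1 + 1 - 2) + 1 := by omega
      rw [e1, Finset.sum_range_succ, show m' + 1 + 1 - 2 = m' by omega]

lemma enum_one : enum 1 = [[0]] := rfl

lemma lastL_single : lastL [0] = 0 := rfl

lemma symPeaks_single : symPeaks [0] = 0 := by decide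

lemma pendCount_single : pendCount [0] = 0 := by decide

lemma gsum_one (f : List ℕ → ℕ) (c : ℕ) : gsum f 1 c = if c = 0 then f [0] else 0 := by
  rw [gsum, enum_one]
  by_cases h : c = 0
  · subst h
    rw [List.filter_cons, if_pos (by simp [lastL_single])]
    simp
  · rw [List.filter_cons, if_neg (show ¬ decide (lastL [0] = c) = true by rw [lastL_single]; simpa using Ne.symm h)]
    simp [h]

lemma CBz_one (c : ℕ) : CBz 1 c = if c = 0 then 1 else 0 := by
  by_cases h : c = 0
  · subst h; decide
  · rw [if_neg h, CBz_big 1 c (by omega)]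

lemma rF_one (c : ℕ) : rF 1 c = 0 := by
  by_cases h : 1 ≤ c
  · rw [rF, if_pos h, Finset.sum_range_one, CBz_big 0 (c-1) (by omega)]
  · rw [rF, if_neg h]

lemma QF_one (c : ℕ) : QF 1 c = 0 := by
  rw [QF, show 1 - c - 2 = 0 by omega]
  simp

lemma tables (n : ℕ) :
    (∀ c, Aq (n+1) c = CBz (n+1) c) ∧ (∀ c, Rq (n+1) c = rF (n+1) c) ∧
      (∀ c, Pq (n+1) c = QF (n+1) c) := by
  induction n with
  | zero =>
    refine ⟨fun c => ?_, fun c => ?_, fun c => ?_⟩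
    · rw [Aq, gsum_one, CBz_one]
    · rw [Rq, gsum_one, rF_one, pendCount_single]
      simp
    · rw [Pq, gsum_one, QF_one, symPeaks_single]
      simp
  | succ m ih =>
    obtain ⟨ihA, ihR, ihP⟩ := ih
    refine ⟨fun c => ?_, fun c => ?_, fun c => ?_⟩
    · rw [Aq_succ m c]
      have hsum : ∀ a ∈ Finset.range (m+1), (if c ≤ a + 1 then Aq (m+1) a else 0)
          = (if c ≤ a + 1 then CBz (m+1) a else 0) := by
        intro a _
        by_cases h : c ≤ a + 1
        · rw [if_pos h, if_pos h, ihA a]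
        · rw [if_neg h, if_neg h]
      rw [Finset.sum_congr rfl hsum]
      exact A_id m c
    · rw [Rq_succ m c, ihR c, rF_succ (m+1) c]
      congr 1
      by_cases h : 1 ≤ c
      · rw [if_pos h, if_pos h, ihA (c-1)]
      · rw [if_neg h, if_neg h]
    · rw [Pq_succ m c, ihR (c+1)]
      have hsum : ∀ a ∈ Finset.range (m+1), (if c ≤ a + 1 then Pq (m+1) a else 0)
          = (if c ≤ a + 1 then QF (m+1) a else 0) := by
        intro a _
        by_cases h : c ≤ a + 1
        · rw [if_pos h, if_pos h, ihP a]
        · rw [if_neg h, if_neg h]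
      rw [Finset.sum_congr rfl hsum]
      exact C_id m c

lemma main_count (m : ℕ) :
    ∑ᶠ w ∈ CatalanWord (m+1), symPeaks w
      = ∑ k ∈ Finset.range (m+1-2), Nat.choose (2*k+2) k := by
  classical
  have hset : CatalanWord (m+1) = ↑(enum (m+1)).toFinset := by
    ext w
    simp only [Finset.mem_coe, List.mem_toFinset]
    exact (mem_enum_iff m w).symm
  rw [hset, finsum_mem_coe_finset, List.sum_toFinset _ (enum_nodup m), total_eq_gsum symPeaks m]
  have hP := (tables m).2.2
  have hsum : ∀ c ∈ Finset.range (m+1), gsum symPeaks (m+1) c = QF (m+1) c := by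
    intro c _
    exact hP c
  rw [Finset.sum_congr rfl hsum]
  exact F_id m

/-- The total number of symmetric peaks over all Catalan words of length `n` equals
`Σ_{k=0}^{n-3} C(2k+2, k)` for `n ≥ 3`, and is `0` for `n = 1, 2`. -/
theorem total_symPeaks :
    (∀ n : ℕ, 3 ≤ n →
      ∑ᶠ w ∈ CatalanWord n, symPeaks w =
        ∑ k ∈ Finset.range (n - 2), Nat.choose (2 * k + 2) k) ∧
    (∑ᶠ w ∈ CatalanWord 1, symPeaks w = 0) ∧
    (∑ᶠ w ∈ CatalanWord 2, symPeaks w = 0) := by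
  refine ⟨?_, ?_, ?_⟩
  · intro n hn
    obtain ⟨m, rfl⟩ : ∃ m, n = m + 1 := ⟨n - 1, by omega⟩
    exact main_count m
  · simpa using main_count 0
  · simpa using main_count 1
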